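/- Let I_{1,k+2} denote the odd unimodular lattice with orthogonal basis h, e₁, …, e_{k+2} where h² = 1 and eᵢ² = −1, and view I_{1,k} as the sublattice spanned by h, e₁, …, e_k. Suppose v ∈ I_{1,k} has v·v = 1 and its orthogonal complement in I_{1,k} is Λ. Then the orthogonal complement of 2v − e_{k+1} − e_{k+2} in I_{1,k+2} is isomorphic to Λ ⊕ ⟨−2⟩ ⊕ ⟨−1⟩. -/

import Mathlib

open BigOperators Matrix

/-- Gram matrix of the odd unimodular lattice `I_{1,n-1}`: diagonal `(1, -1, …, -1)`. -/
def hypMat (n : ℕ) : Matrix (Fin n) (Fin n) ℤ :=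
  Matrix.diagonal fun i => if (i : ℕ) = 0 then 1 else -1

/-- The bilinear form of `I_{1,n-1}` on `Fin n → ℤ`. -/
def bilin (n : ℕ) (x y : Fin n → ℤ) : ℤ :=
  x ⬝ᵥ (hypMat n).mulVec y

/-- The orthogonal complement of `v` in `I_{1,n-1}`. -/
def perp (n : ℕ) (v : Fin n → ℤ) : Submodule ℤ (Fin n → ℤ) where
  carrier := {x | bilin n v x = 0}
  add_mem' := by
    intro a b ha hb
    simp only [Set.mem_setOf_eq, bilin, Matrix.mulVec_add, dotProduct_add] at *
    omega
  zero_mem' := by simp [bilin]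
  smul_mem' := by
    intro c x hx
    simp only [Set.mem_setOf_eq, bilin] at *
    rw [Matrix.mulVec_smul, dotProduct_smul, hx, smul_zero]

lemma bilin_expand (n : ℕ) (x y : Fin n → ℤ) :
    bilin n x y = ∑ i, x i * ((if (i : ℕ) = 0 then 1 else -1) * y i) := by
  simp [bilin, hypMat, Matrix.mulVec_diagonal, dotProduct]

lemma bilin_symm (n : ℕ) (x y : Fin n → ℤ) : bilin n x y = bilin n y x := by
  simp only [bilin_expand]; apply Finset.sum_congr rfl; intros; ring

lemma bilin_add_right (n : ℕ) (x y z : Fin n → ℤ) :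
    bilin n x (y + z) = bilin n x y + bilin n x z := by
  simp only [bilin_expand, ← Finset.sum_add_distrib]
  apply Finset.sum_congr rfl; intros; simp only [Pi.add_apply]; split <;> ring

lemma bilin_sub_right (n : ℕ) (x y z : Fin n → ℤ) :
    bilin n x (y - z) = bilin n x y - bilin n x z := by
  simp only [bilin_expand, ← Finset.sum_sub_distrib]
  apply Finset.sum_congr rfl; intros; simp only [Pi.sub_apply]; split <;> ring

lemma bilin_smul_right (n : ℕ) (c : ℤ) (x y : Fin n → ℤ) :
    bilin n x (c • y) = c * bilin n x y := by
  simp only [bilin_expand, Finset.mul_sum]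
  apply Finset.sum_congr rfl; intros; simp only [Pi.smul_apply, smul_eq_mul]; split <;> ring

lemma bilin_add_left (n : ℕ) (x y z : Fin n → ℤ) :
    bilin n (x + y) z = bilin n x z + bilin n y z := by
  rw [bilin_symm, bilin_add_right, bilin_symm n z x, bilin_symm n z y]

lemma bilin_sub_left (n : ℕ) (x y z : Fin n → ℤ) :
    bilin n (x - y) z = bilin n x z - bilin n y z := by
  rw [bilin_symm, bilin_sub_right, bilin_symm n z x, bilin_symm n z y]

lemma bilin_smul_left (n : ℕ) (c : ℤ) (x y : Fin n → ℤ) :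
    bilin n (c • x) y = c * bilin n x y := by
  rw [bilin_symm, bilin_smul_right, bilin_symm]

lemma bilin_single_right (n : ℕ) (x : Fin n → ℤ) (j : Fin n) (hj : (j : ℕ) ≠ 0) :
    bilin n x (Pi.single j 1) = -x j := by
  rw [bilin_expand, Fintype.sum_eq_single j]
  · simp [hj]
  · intro i hi; simp [Pi.single_eq_of_ne hi]

/-- View `I_{1,k}` inside `I_{1,k+2}` as the vectors vanishing on the
two last coordinates `e_{k+1}, e_{k+2}`. If `v ∈ I_{1,k}` has `v·v = 1` with orthogonal
complement `Λ` in `I_{1,k}`, then the orthogonal complement of `2v − e_{k+1} − e_{k+2}`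
in `I_{1,k+2}` is isomorphic, as a lattice, to `Λ ⊕ ⟨−2⟩ ⊕ ⟨−1⟩`. -/
theorem stmt7 (k : ℕ) (i1 i2 : Fin (k + 3)) (hi1 : (i1 : ℕ) = k + 1) (hi2 : (i2 : ℕ) = k + 2)
    (v : Fin (k + 3) → ℤ) (hv1 : v i1 = 0) (hv2 : v i2 = 0)
    (hvv : bilin (k + 3) v v = 1)
    (Λ : Submodule ℤ (Fin (k + 3) → ℤ))
    (hΛ : Λ = perp (k + 3) v ⊓
      LinearMap.ker (LinearMap.proj (R := ℤ) (φ := fun _ : Fin (k + 3) => ℤ) i1) ⊓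
      LinearMap.ker (LinearMap.proj (R := ℤ) (φ := fun _ : Fin (k + 3) => ℤ) i2)) :
    ∃ f : (perp (k + 3) (2 • v - Pi.single i1 1 - Pi.single i2 1)) ≃ₗ[ℤ] (Λ × ℤ × ℤ),
      ∀ x y : (perp (k + 3) (2 • v - Pi.single i1 1 - Pi.single i2 1)),
        bilin (k + 3) (x : Fin (k + 3) → ℤ) (y : Fin (k + 3) → ℤ)
          = bilin (k + 3) ((f x).1 : Fin (k + 3) → ℤ) ((f y).1 : Fin (k + 3) → ℤ)
            + (-2) * ((f x).2.1 * (f y).2.1)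
            + (-1) * ((f x).2.2 * (f y).2.2) := by
  have hi10 : (i1 : ℕ) ≠ 0 := by omega
  have hi20 : (i2 : ℕ) ≠ 0 := by omega
  have hne : i1 ≠ i2 := fun h => by rw [h, hi2] at hi1; omega
  have hne' : i2 ≠ i1 := hne.symm
  set e1 : Fin (k + 3) → ℤ := Pi.single i1 1 with he1
  set e2 : Fin (k + 3) → ℤ := Pi.single i2 1 with he2
  set u1 : Fin (k + 3) → ℤ := e1 - e2 with hu1
  set u2 : Fin (k + 3) → ℤ := v - e1 - e2 with hu2
  set w : Fin (k + 3) → ℤ := 2 • v - e1 - e2 with hwdef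
  -- coordinate facts
  have he1i1 : e1 i1 = 1 := Pi.single_eq_same i1 1
  have he1i2 : e1 i2 = 0 := Pi.single_eq_of_ne hne' 1
  have he2i1 : e2 i1 = 0 := Pi.single_eq_of_ne hne 1
  have he2i2 : e2 i2 = 1 := Pi.single_eq_same i2 1
  have hu1i1 : u1 i1 = 1 := by simp [hu1, he1i1, he2i1]
  have hu1i2 : u1 i2 = -1 := by simp [hu1, he1i2, he2i2]
  have hu2i1 : u2 i1 = -1 := by simp [hu2, hv1, he1i1, he2i1]
  have hu2i2 : u2 i2 = -1 := by simp [hu2, hv2, he1i2, he2i2]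
  -- bilin values
  have hBe1 : ∀ x : Fin (k + 3) → ℤ, bilin (k + 3) x e1 = -x i1 :=
    fun x => bilin_single_right (k + 3) x i1 hi10
  have hBe2 : ∀ x : Fin (k + 3) → ℤ, bilin (k + 3) x e2 = -x i2 :=
    fun x => bilin_single_right (k + 3) x i2 hi20
  have hBu1 : ∀ x : Fin (k + 3) → ℤ, bilin (k + 3) x u1 = -x i1 + x i2 := by
    intro x; rw [hu1, bilin_sub_right, hBe1, hBe2]; ring
  have hBu2 : ∀ x : Fin (k + 3) → ℤ,
      bilin (k + 3) x u2 = bilin (k + 3) v x + x i1 + x i2 := by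
    intro x; rw [hu2, bilin_sub_right, bilin_sub_right, hBe1, hBe2,
      bilin_symm (k + 3) x v]; ring
  have hBw : ∀ x : Fin (k + 3) → ℤ,
      bilin (k + 3) w x = 2 * bilin (k + 3) v x + x i1 + x i2 := by
    intro x
    rw [hwdef, bilin_sub_left, bilin_sub_left, two_smul, bilin_add_left,
      bilin_symm (k + 3) e1 x, bilin_symm (k + 3) e2 x, hBe1, hBe2]; ring
  have hvu1 : bilin (k + 3) v u1 = 0 := by rw [hBu1, hv1, hv2]; ring
  have hvu2 : bilin (k + 3) v u2 = 1 := by rw [hBu2, hv1, hv2, hvv]; ring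
  -- membership characterizations
  have hPmem : ∀ x : Fin (k + 3) → ℤ, x ∈ perp (k + 3) w ↔ bilin (k + 3) w x = 0 :=
    fun _ => Iff.rfl
  have hΛmem : ∀ x : Fin (k + 3) → ℤ,
      x ∈ Λ ↔ bilin (k + 3) v x = 0 ∧ x i1 = 0 ∧ x i2 = 0 := by
    intro x
    rw [hΛ]
    simp only [Submodule.mem_inf, LinearMap.mem_ker, LinearMap.proj_apply]
    constructor
    · rintro ⟨⟨h1, h2⟩, h3⟩; exact ⟨h1, h2, h3⟩
    · rintro ⟨h1, h2, h3⟩; exact ⟨⟨h1, h2⟩, h3⟩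
  -- forward membership
  have memΛ : ∀ x : Fin (k + 3) → ℤ, x ∈ perp (k + 3) w →
      (x - (x i1 + bilin (k + 3) v x) • u1 - (bilin (k + 3) v x) • u2) ∈ Λ := by
    intro x hx0
    have hx : 2 * bilin (k + 3) v x + x i1 + x i2 = 0 := by
      rw [← hBw]; exact (hPmem x).mp hx0
    rw [hΛmem]
    refine ⟨?_, ?_, ?_⟩
    · rw [bilin_sub_right, bilin_sub_right, bilin_smul_right, bilin_smul_right, hvu1, hvu2]
      ring
    · simp only [Pi.sub_apply, Pi.smul_apply, smul_eq_mul, hu1i1, hu2i1]; ring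
    · simp only [Pi.sub_apply, Pi.smul_apply, smul_eq_mul, hu1i2, hu2i2]; linarith
  -- backward membership
  have memP : ∀ (x : Fin (k + 3) → ℤ) (a b : ℤ), x ∈ Λ →
      (x + a • u1 + b • u2) ∈ perp (k + 3) w := by
    intro x a b hx
    obtain ⟨h1, h2, h3⟩ := (hΛmem x).mp hx
    rw [hPmem, hBw, bilin_add_right, bilin_add_right, bilin_smul_right, bilin_smul_right,
      hvu1, hvu2]
    simp only [Pi.add_apply, Pi.smul_apply, smul_eq_mul, hu1i1, hu1i2, hu2i1, hu2i2, h1, h2, h3]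
    ring
  refine ⟨⟨⟨⟨fun x => (⟨x.1 - (x.1 i1 + bilin (k + 3) v x.1) • u1 - (bilin (k + 3) v x.1) • u2,
      memΛ x.1 x.2⟩, x.1 i1 + bilin (k + 3) v x.1, bilin (k + 3) v x.1), ?_⟩, ?_⟩,
      fun p => ⟨p.1.1 + p.2.1 • u1 + p.2.2 • u2, memP p.1.1 p.2.1 p.2.2 p.1.2⟩, ?_, ?_⟩, ?_⟩
  · -- map_add
    intro x y
    have hs : bilin (k + 3) v (x.1 + y.1) = bilin (k + 3) v x.1 + bilin (k + 3) v y.1 :=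
      bilin_add_right (k + 3) v x.1 y.1
    refine Prod.ext (Subtype.ext ?_) (Prod.ext ?_ ?_)
    · show (x.1 + y.1) - ((x.1 + y.1) i1 + bilin (k + 3) v (x.1 + y.1)) • u1
          - (bilin (k + 3) v (x.1 + y.1)) • u2
        = (x.1 - (x.1 i1 + bilin (k + 3) v x.1) • u1 - (bilin (k + 3) v x.1) • u2)
          + (y.1 - (y.1 i1 + bilin (k + 3) v y.1) • u1 - (bilin (k + 3) v y.1) • u2)
      rw [hs]
      simp only [Pi.add_apply]
      module
    · show (x.1 + y.1) i1 + bilin (k + 3) v (x.1 + y.1)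
        = (x.1 i1 + bilin (k + 3) v x.1) + (y.1 i1 + bilin (k + 3) v y.1)
      rw [hs]; simp only [Pi.add_apply]; ring
    · exact hs
  · -- map_smul
    intro c x
    have hs : bilin (k + 3) v (c • x.1) = c * bilin (k + 3) v x.1 :=
      bilin_smul_right (k + 3) c v x.1
    refine Prod.ext (Subtype.ext ?_) (Prod.ext ?_ ?_)
    · show (c • x.1) - ((c • x.1) i1 + bilin (k + 3) v (c • x.1)) • u1
          - (bilin (k + 3) v (c • x.1)) • u2
        = c • (x.1 - (x.1 i1 + bilin (k + 3) v x.1) • u1 - (bilin (k + 3) v x.1) • u2)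
      rw [hs]
      simp only [Pi.smul_apply, smul_eq_mul]
      module
    · show (c • x.1) i1 + bilin (k + 3) v (c • x.1) = c * (x.1 i1 + bilin (k + 3) v x.1)
      rw [hs]; simp only [Pi.smul_apply, smul_eq_mul]; ring
    · exact hs
  · -- left_inv
    intro x
    apply Subtype.ext
    show (x.1 - (x.1 i1 + bilin (k + 3) v x.1) • u1 - (bilin (k + 3) v x.1) • u2)
        + (x.1 i1 + bilin (k + 3) v x.1) • u1 + (bilin (k + 3) v x.1) • u2 = x.1
    module
  · -- right_inv
    intro p
    obtain ⟨⟨l, hl⟩, a, b⟩ := p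
    obtain ⟨h1, h2, h3⟩ := (hΛmem l).mp hl
    have hsv : bilin (k + 3) v (l + a • u1 + b • u2) = b := by
      rw [bilin_add_right, bilin_add_right, bilin_smul_right, bilin_smul_right, h1, hvu1, hvu2]
      ring
    have hci1 : (l + a • u1 + b • u2) i1 = a - b := by
      simp only [Pi.add_apply, Pi.smul_apply, smul_eq_mul, hu1i1, hu2i1, h2]; ring
    refine Prod.ext (Subtype.ext ?_) (Prod.ext ?_ ?_)
    · show (l + a • u1 + b • u2)
          - ((l + a • u1 + b • u2) i1 + bilin (k + 3) v (l + a • u1 + b • u2)) • u1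
          - (bilin (k + 3) v (l + a • u1 + b • u2)) • u2 = l
      rw [hsv, hci1]
      module
    · show (l + a • u1 + b • u2) i1 + bilin (k + 3) v (l + a • u1 + b • u2) = a
      rw [hsv, hci1]; ring
    · exact hsv
  · -- bilinear identity
    intro x y
    show bilin (k + 3) x.1 y.1
      = bilin (k + 3)
          (x.1 - (x.1 i1 + bilin (k + 3) v x.1) • u1 - (bilin (k + 3) v x.1) • u2)
          (y.1 - (y.1 i1 + bilin (k + 3) v y.1) • u1 - (bilin (k + 3) v y.1) • u2)
        + (-2) * ((x.1 i1 + bilin (k + 3) v x.1) * (y.1 i1 + bilin (k + 3) v y.1))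
        + (-1) * (bilin (k + 3) v x.1 * bilin (k + 3) v y.1)
    have hx : 2 * bilin (k + 3) v x.1 + x.1 i1 + x.1 i2 = 0 := by
      rw [← hBw]; exact (hPmem x.1).mp x.2
    have hy : 2 * bilin (k + 3) v y.1 + y.1 i1 + y.1 i2 = 0 := by
      rw [← hBw]; exact (hPmem y.1).mp y.2
    have hs1 : bilin (k + 3) u1 y.1 = -y.1 i1 + y.1 i2 := by
      rw [bilin_symm, hBu1]
    have hs2 : bilin (k + 3) u2 y.1 = bilin (k + 3) v y.1 + y.1 i1 + y.1 i2 := by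
      rw [bilin_symm, hBu2]
    simp only [bilin_sub_left, bilin_sub_right, bilin_smul_left, bilin_smul_right,
      hBu1, hBu2, hs1, hs2, hvu1, hvu2, Pi.sub_apply, Pi.smul_apply, smul_eq_mul,
      hu1i1, hu1i2, hu2i1, hu2i2, hv1, hv2, hvv]
    linear_combination (y.1 i1 + 2 * bilin (k + 3) v y.1) * hx + (x.1 i1 + 2 * bilin (k + 3) v x.1) * hy
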